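/- Suppose a column falls in steps, where each variable gadget i contributes dᵢ cells with dᵢ ≡ 0 (mod 6) if variable i is false or does not occur in the clause, and dᵢ ≡ 2 (mod 6) if variable i is true and occurs in the clause. If the clause contains at most 3 variables, then the total fall is ≡ 2 (mod 6) iff exactly one variable of the clause is true. -/
import Mathlib


theorem total_fall_iff_exactly_one_true (n : ℕ) (τ : Fin n → Bool)
    (c : Finset (Fin n)) (hc : c.card ≤ 3) (d : Fin n → ℤ)
    (h0 : ∀ i, (τ i = false ∨ i ∉ c) → d i ≡ 0 [ZMOD 6])
    (h2 : ∀ i, τ i = true → i ∈ c → d i ≡ 2 [ZMOD 6]) :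
    (∑ i, d i) ≡ 2 [ZMOD 6] ↔ (c.filter (fun i => τ i = true)).card = 1 := by
  set S := c.filter (fun i => τ i = true) with hS
  have hk : S.card ≤ 3 := le_trans (Finset.card_filter_le _ _) hc
  have h0' : ∀ i, (τ i = false ∨ i ∉ c) → ((d i : ZMod 6) = 0) := fun i h => by
    have := (ZMod.intCast_eq_intCast_iff _ _ _).mpr (h0 i h); simpa using this
  have h2' : ∀ i, τ i = true → i ∈ c → ((d i : ZMod 6) = 2) := fun i ht hi => by
    have := (ZMod.intCast_eq_intCast_iff _ _ _).mpr (h2 i ht hi); simpa using this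
  have hsum : ((∑ i, d i : ℤ) : ZMod 6) = 2 * (S.card : ZMod 6) := by
    push_cast
    rw [← Finset.sum_subset (Finset.subset_univ S)
      (fun i _ hi => by
        apply h0'
        rcases Bool.eq_false_or_eq_true (τ i) with h | h
        · right; intro hic
          exact hi (Finset.mem_filter.mpr ⟨hic, h⟩)
        · exact Or.inl h)]
    rw [Finset.sum_congr rfl (fun i hi => by
      rcases Finset.mem_filter.mp hi with ⟨hic, ht⟩
      exact h2' i ht hic)]
    simp [mul_comm]
  rw [show ((∑ i, d i) ≡ 2 [ZMOD 6]) ↔ (((∑ i, d i : ℤ) : ZMod 6) = ((2:ℤ) : ZMod 6))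
      from (ZMod.intCast_eq_intCast_iff _ _ _).symm, hsum]
  have : ((2:ℤ) : ZMod 6) = 2 := by norm_num
  rw [this]
  set k := S.card with hkk
  clear_value k
  constructor
  · intro h
    interval_cases k <;> revert h <;> decide
  · intro h; subst h; decide
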